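/- arXiv:2109.08170 — 3 statements merged into one kernel-verified Lean document; each statement's English description precedes it below -/
import Mathlib

section
/- For x ∈ {0,1} and angles α, β ∈ (0, π), the 4×4 unitary matrix U_⊛(α,β) with entries determined by a_± = (cos((α−β)/2) ± cos((α+β)/2)) / (2|cos((α⊛β)/2)|) and b_± = (sin((α+β)/2) ± sin((α−β)/2)) / (2|sin((α⊛β)/2)|), applied to the vector |x;α⟩ ⊗ |x;β⟩ where |x;θ⟩ = cos(θ/2)|0⟩ + (−1)^x sin(θ/2)|1⟩, yields |x; α⊛β⟩ ⊗ |0⟩. -/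
open Real

/-- The equality-node angle `α ⊛ β := arccos (cos α * cos β)`. -/
noncomputable def ostar (α β : ℝ) : ℝ := Real.arccos (Real.cos α * Real.cos β)

/-- `a₊` and `a₋` (via sign `s = ±1`). -/
noncomputable def aCoef (s : ℝ) (α β : ℝ) : ℝ :=
  (Real.cos ((α - β) / 2) + s * Real.cos ((α + β) / 2)) / (2 * |Real.cos (ostar α β / 2)|)

/-- `b₊` and `b₋` (via sign `s = ±1`). -/
noncomputable def bCoef (s : ℝ) (α β : ℝ) : ℝ :=
  (Real.sin ((α + β) / 2) + s * Real.sin ((α - β) / 2)) / (2 * |Real.sin (ostar α β / 2)|)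

/-- The 4×4 equality-node unitary `U_⊛(α, β)`, in the computational basis
`|00⟩, |01⟩, |10⟩, |11⟩`. -/
noncomputable def Ustar (α β : ℝ) : Matrix (Fin 4) (Fin 4) ℝ :=
  !![aCoef 1 α β, 0, 0, aCoef (-1) α β;
     -aCoef (-1) α β, 0, 0, aCoef 1 α β;
     0, bCoef (-1) α β, bCoef 1 α β, 0;
     0, bCoef 1 α β, -bCoef (-1) α β, 0]

/-- The qubit state `|x; θ⟩ = cos(θ/2)|0⟩ + (-1)^x sin(θ/2)|1⟩`. -/
noncomputable def qubit (x : Fin 2) (θ : ℝ) : Fin 2 → ℝ :=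
  ![Real.cos (θ / 2), (-1 : ℝ) ^ (x : ℕ) * Real.sin (θ / 2)]

/-- Tensor product of two single-qubit vectors, in the basis `|00⟩,|01⟩,|10⟩,|11⟩`. -/
def tens (a b : Fin 2 → ℝ) : Fin 4 → ℝ :=
  ![a 0 * b 0, a 0 * b 1, a 1 * b 0, a 1 * b 1]

/-- Applying `U_⊛(α, β)` to `|x;α⟩ ⊗ |x;β⟩` yields `|x; α⊛β⟩ ⊗ |0⟩`. -/
theorem Ustar_apply (α β : ℝ) (hα : α ∈ Set.Ioo 0 π) (hβ : β ∈ Set.Ioo 0 π)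
    (x : Fin 2) :
    (Ustar α β).mulVec (tens (qubit x α) (qubit x β)) =
      tens (qubit x (ostar α β)) ![1, 0] := by
  obtain ⟨hα0, hαπ⟩ := hα
  obtain ⟨hβ0, hβπ⟩ := hβ
  have hca1 : Real.cos α < 1 := by
    have := Real.cos_lt_cos_of_nonneg_of_le_pi (le_refl 0) (le_of_lt hαπ) hα0
    simpa using this
  have hca2 : -1 < Real.cos α := by
    have := Real.cos_lt_cos_of_nonneg_of_le_pi (le_of_lt hα0) (le_refl π) hαπ
    simpa using this
  have hcb1 : Real.cos β < 1 := by
    have := Real.cos_lt_cos_of_nonneg_of_le_pi (le_refl 0) (le_of_lt hβπ) hβ0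
    simpa using this
  have hcb2 : -1 < Real.cos β := by
    have := Real.cos_lt_cos_of_nonneg_of_le_pi (le_of_lt hβ0) (le_refl π) hβπ
    simpa using this
  have hp1 : Real.cos α * Real.cos β < 1 := by nlinarith
  have hp2 : -1 < Real.cos α * Real.cos β := by nlinarith
  set θ := ostar α β with hθ
  have hθ0 : 0 < θ := Real.arccos_pos.2 hp1
  have hθπ : θ < π := by
    rcases lt_or_eq_of_le (Real.arccos_le_pi (Real.cos α * Real.cos β)) with h | h
    · exact h
    · exact absurd (Real.arccos_eq_pi.1 h) (by linarith)
  have hcosθ : Real.cos θ = Real.cos α * Real.cos β :=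
    Real.cos_arccos (le_of_lt hp2) (le_of_lt hp1)
  have hc : 0 < Real.cos (θ / 2) :=
    Real.cos_pos_of_mem_Ioo ⟨by linarith [Real.pi_pos], by linarith⟩
  have hs : 0 < Real.sin (θ / 2) :=
    Real.sin_pos_of_pos_of_lt_pi (by linarith) (by linarith [Real.pi_pos])
  have habs_c : |Real.cos (θ / 2)| = Real.cos (θ / 2) := abs_of_pos hc
  have habs_s : |Real.sin (θ / 2)| = Real.sin (θ / 2) := abs_of_pos hs
  set cA := Real.cos (α / 2)
  set sA := Real.sin (α / 2)
  set cB := Real.cos (β / 2)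
  set sB := Real.sin (β / 2)
  set c := Real.cos (θ / 2)
  set s := Real.sin (θ / 2)
  have hdouble : ∀ y : ℝ, Real.cos y = Real.cos (y/2) ^ 2 - Real.sin (y/2) ^ 2 := by
    intro y
    have h := Real.cos_two_mul (y / 2)
    have h2 := Real.sin_sq_add_cos_sq (y / 2)
    rw [show 2 * (y / 2) = y by ring] at h
    linarith
  have hcθ : Real.cos θ = c ^ 2 - s ^ 2 := hdouble θ
  have pA : sA ^ 2 + cA ^ 2 = 1 := Real.sin_sq_add_cos_sq _
  have pB : sB ^ 2 + cB ^ 2 = 1 := Real.sin_sq_add_cos_sq _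
  have pθ : s ^ 2 + c ^ 2 = 1 := Real.sin_sq_add_cos_sq _
  have key : c ^ 2 - s ^ 2 = (cA ^ 2 - sA ^ 2) * (cB ^ 2 - sB ^ 2) := by
    rw [← hcθ, ← hdouble α, ← hdouble β, hcosθ]
  have one : (sA ^ 2 + cA ^ 2) * (sB ^ 2 + cB ^ 2) = 1 := by rw [pA, pB]; ring
  have h1 : c ^ 2 = cA ^ 2 * cB ^ 2 + sA ^ 2 * sB ^ 2 := by
    linear_combination key / 2 + pθ / 2 - one / 2
  have h2 : s ^ 2 = cA ^ 2 * sB ^ 2 + sA ^ 2 * cB ^ 2 := by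
    linear_combination pθ / 2 - key / 2 - one / 2
  have hsub : Real.cos ((α - β) / 2) = cA * cB + sA * sB := by
    rw [show (α - β) / 2 = α / 2 - β / 2 by ring, Real.cos_sub]
  have hadd : Real.cos ((α + β) / 2) = cA * cB - sA * sB := by
    rw [show (α + β) / 2 = α / 2 + β / 2 by ring, Real.cos_add]
  have hsinadd : Real.sin ((α + β) / 2) = sA * cB + cA * sB := by
    rw [show (α + β) / 2 = α / 2 + β / 2 by ring, Real.sin_add]
  have hsinsub : Real.sin ((α - β) / 2) = sA * cB - cA * sB := by
    rw [show (α - β) / 2 = α / 2 - β / 2 by ring, Real.sin_sub]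
  have ha1 : aCoef 1 α β = cA * cB / c := by
    rw [aCoef, ← hθ, habs_c, hsub, hadd]; ring
  have ha2 : aCoef (-1) α β = sA * sB / c := by
    rw [aCoef, ← hθ, habs_c, hsub, hadd]; ring
  have hb1 : bCoef 1 α β = sA * cB / s := by
    rw [bCoef, ← hθ, habs_s, hsinadd, hsinsub]; ring
  have hb2 : bCoef (-1) α β = cA * sB / s := by
    rw [bCoef, ← hθ, habs_s, hsinadd, hsinsub]; ring
  have ecA : Real.cos (α / 2) = cA := rfl
  have esA : Real.sin (α / 2) = sA := rfl
  have ecB : Real.cos (β / 2) = cB := rfl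
  have esB : Real.sin (β / 2) = sB := rfl
  have ec : Real.cos (ostar α β / 2) = c := rfl
  have es : Real.sin (ostar α β / 2) = s := rfl
  have hc' := ne_of_gt hc
  have hs' := ne_of_gt hs
  clear_value cA sA cB sB c s
  funext i
  fin_cases x <;> fin_cases i <;>
    simp [Ustar, tens, qubit, Matrix.mulVec, dotProduct, Fin.sum_univ_four,
      ha1, ha2, hb1, hb2, ecA, esA, ecB, esB, hθ, ec, es] <;>
    field_simp
  · linear_combination -h1
  · ring
  · linear_combination -h2
  · ring
  · linear_combination -h1
  · ring
  · linear_combination h2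
  · ring
end

section
/- The 4×4 matrix U_⊛(α,β) defined by the entries a_± = (cos((α−β)/2) ± cos((α+β)/2)) / (2|cos((α⊛β)/2)|) and b_± = (sin((α+β)/2) ± sin((α−β)/2)) / (2|sin((α⊛β)/2)|) is unitary for all α, β ∈ (0, π). -/
open Real Matrix

lemma key (α β : ℝ) (hα : α ∈ Set.Ioo 0 π) (hβ : β ∈ Set.Ioo 0 π) :
    aCoef 1 α β ^ 2 + aCoef (-1) α β ^ 2 = 1 ∧
    bCoef 1 α β ^ 2 + bCoef (-1) α β ^ 2 = 1 := by
  obtain ⟨hα1, hα2⟩ := hα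
  obtain ⟨hβ1, hβ2⟩ := hβ
  have hpi := Real.pi_pos
  have hca1 : Real.cos α < 1 := by
    have := Real.strictAntiOn_cos (Set.mem_Icc.2 ⟨le_refl 0, hpi.le⟩)
      (Set.mem_Icc.2 ⟨hα1.le, hα2.le⟩) hα1
    simpa using this
  have hca2 : -1 < Real.cos α := by
    have := Real.strictAntiOn_cos (Set.mem_Icc.2 ⟨hα1.le, hα2.le⟩)
      (Set.mem_Icc.2 ⟨hpi.le, le_refl π⟩) hα2
    simpa using this
  have hcb1 : Real.cos β < 1 := by
    have := Real.strictAntiOn_cos (Set.mem_Icc.2 ⟨le_refl 0, hpi.le⟩)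
      (Set.mem_Icc.2 ⟨hβ1.le, hβ2.le⟩) hβ1
    simpa using this
  have hcb2 : -1 < Real.cos β := by
    have := Real.strictAntiOn_cos (Set.mem_Icc.2 ⟨hβ1.le, hβ2.le⟩)
      (Set.mem_Icc.2 ⟨hpi.le, le_refl π⟩) hβ2
    simpa using this
  set c : ℝ := Real.cos α * Real.cos β with hc
  have hc1 : -1 < c := by nlinarith
  have hc2 : c < 1 := by nlinarith
  have hcos : Real.cos (ostar α β) = c := Real.cos_arccos hc1.le hc2.le
  have hA : Real.cos (ostar α β / 2) ^ 2 = (1 + c) / 2 := by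
    have := Real.cos_sq (ostar α β / 2)
    rw [mul_div_cancel₀ _ (two_ne_zero)] at this
    rw [this, hcos]; ring
  have hB : Real.sin (ostar α β / 2) ^ 2 = (1 - c) / 2 := by
    have := Real.sin_sq (ostar α β / 2)
    rw [this, hA]; ring
  have hAne : |Real.cos (ostar α β / 2)| ≠ 0 := by
    intro h
    have : Real.cos (ostar α β / 2) = 0 := abs_eq_zero.mp h
    rw [this] at hA; nlinarith
  have hBne : |Real.sin (ostar α β / 2)| ≠ 0 := by
    intro h
    have : Real.sin (ostar α β / 2) = 0 := abs_eq_zero.mp h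
    rw [this] at hB; nlinarith
  have h1 : Real.cos ((α - β) / 2) ^ 2 = (1 + Real.cos (α - β)) / 2 := by
    have := Real.cos_sq ((α - β) / 2)
    rw [mul_div_cancel₀ _ (two_ne_zero)] at this
    rw [this]; ring
  have h2 : Real.cos ((α + β) / 2) ^ 2 = (1 + Real.cos (α + β)) / 2 := by
    have := Real.cos_sq ((α + β) / 2)
    rw [mul_div_cancel₀ _ (two_ne_zero)] at this
    rw [this]; ring
  have h3 : Real.sin ((α - β) / 2) ^ 2 = (1 - Real.cos (α - β)) / 2 := by
    have := Real.sin_sq ((α - β) / 2); rw [this, h1]; ring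
  have h4 : Real.sin ((α + β) / 2) ^ 2 = (1 - Real.cos (α + β)) / 2 := by
    have := Real.sin_sq ((α + β) / 2); rw [this, h2]; ring
  have hsum : Real.cos (α - β) + Real.cos (α + β) = 2 * c := by
    rw [Real.cos_sub, Real.cos_add, hc]; ring
  constructor
  · unfold aCoef
    rw [div_pow, div_pow, ← add_div, mul_pow, sq_abs, hA,
      div_eq_one_iff_eq (by nlinarith)]
    linear_combination 2 * h1 + 2 * h2 + hsum
  · unfold bCoef
    rw [div_pow, div_pow, ← add_div, mul_pow, sq_abs, hB,
      div_eq_one_iff_eq (by nlinarith)]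
    linear_combination 2 * h3 + 2 * h4 - hsum

/-- `U_⊛(α, β)` is unitary (real orthogonal) for all `α, β ∈ (0, π)`. -/
theorem Ustar_unitary (α β : ℝ) (hα : α ∈ Set.Ioo 0 π) (hβ : β ∈ Set.Ioo 0 π) :
    Ustar α β * (Ustar α β)ᵀ = 1 ∧ (Ustar α β)ᵀ * Ustar α β = 1 := by
  obtain ⟨hA, hB⟩ := key α β hα hβ
  have hT : (Ustar α β)ᵀ =
      !![aCoef 1 α β, -aCoef (-1) α β, 0, 0;
         0, 0, bCoef (-1) α β, bCoef 1 α β;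
         0, 0, bCoef 1 α β, -bCoef (-1) α β;
         aCoef (-1) α β, aCoef 1 α β, 0, 0] := by
    ext i j
    fin_cases i <;> fin_cases j <;> rfl
  rw [hT]
  constructor <;>
  · ext i j
    fin_cases i <;> fin_cases j <;>
      simp [Ustar, Matrix.mul_apply, Fin.sum_univ_four, Matrix.one_apply, Matrix.vecHead, Matrix.vecTail] <;>
      ring_nf <;> linarith [hA, hB]
end

section
/- Let S = {|φ_i⟩}_{i=1}^m be a set of linearly independent unit vectors in a finite-dimensional complex Hilbert space, forming a geometrically uniform set: S = {U|φ⟩ : U ∈ G} for a fixed unit vector |φ⟩ and a finite abelian group G of unitaries. Then the pretty-good measurement vectors |f_i⟩ := (1/√m) ρ^{−1/2} |φ_i⟩, where ρ := (1/m) Σ_i |φ_i⟩⟨φ_i| and the inverse square root is taken on the support of ρ, form an orthonormal set. -/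
open scoped ComplexOrder
open scoped Matrix

/-- **Orthogonality of the pretty-good measurement for geometrically uniform
linearly independent states.** Let `φ₁, …, φ_m` be linearly independent unit
vectors in `ℂ^d` forming a geometrically uniform set (the orbit of a unit
vector `ψ` under a finite abelian group of unitaries). Let
`ρ = (1/m) Σ |φ_i⟩⟨φ_i|` and let `S = ρ^{-1/2}` be the positive-semidefinite
square root of the Moore–Penrose pseudoinverse of `ρ` (characterized by the
four Penrose conditions for `S * S`). Then the pretty-good measurement vectors
`f_i = (1/√m) S φ_i` form an orthonormal set. -/
theorem pgm_orthonormal (d m : ℕ)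
    (φ : Fin m → EuclideanSpace ℂ (Fin d))
    (hunit : ∀ i, ‖φ i‖ = 1)
    (hli : LinearIndependent ℂ φ)
    (hgu : ∃ G : Subgroup (Matrix.unitaryGroup (Fin d) ℂ),
      Finite G ∧ (∀ U V : G, U * V = V * U) ∧
      ∃ ψ : EuclideanSpace ℂ (Fin d), ‖ψ‖ = 1 ∧
        Set.range φ =
          Set.range (fun U : G => (WithLp.toLp 2 ((U : Matrix (Fin d) (Fin d) ℂ).mulVec ψ) :
            EuclideanSpace ℂ (Fin d))))
    (ρ S : Matrix (Fin d) (Fin d) ℂ)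
    (hρ : ρ = ((m : ℂ))⁻¹ •
      ∑ i, Matrix.vecMulVec (φ i) (fun a => (starRingEnd ℂ) (φ i a)))
    (hS : S.PosSemidef)
    (hpen₁ : ρ * (S * S) * ρ = ρ)
    (hpen₂ : (S * S) * ρ * (S * S) = S * S)
    (hpen₃ : (ρ * (S * S)).IsHermitian)
    (hpen₄ : ((S * S) * ρ).IsHermitian)
    (f : Fin m → EuclideanSpace ℂ (Fin d))
    (hf : ∀ i, f i = ((Real.sqrt m : ℂ))⁻¹ •
      (WithLp.toLp 2 (S.mulVec (φ i)) : EuclideanSpace ℂ (Fin d))) :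
    ∀ i j, (inner ℂ (f i) (f j) : ℂ) = if i = j then 1 else 0 := by
  intro i j
  have hm0 : 0 < m := i.pos
  have hm : (m : ℂ) ≠ 0 := Nat.cast_ne_zero.2 hm0.ne'
  set A : Matrix (Fin d) (Fin m) ℂ := Matrix.of (fun a k => φ k a) with hAdef
  set G : Matrix (Fin m) (Fin m) ℂ := Aᴴ * A with hGdef
  set B : Matrix (Fin d) (Fin d) ℂ := S * S with hBdef
  set X : Matrix (Fin m) (Fin m) ℂ := Aᴴ * B * A with hXdef
  -- ρ as a matrix product
  have hρA : ρ = (m : ℂ)⁻¹ • (A * Aᴴ) := by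
    rw [hρ]
    congr 1
    ext a b
    simp [Matrix.mul_apply, Matrix.vecMulVec_apply, Matrix.sum_apply, hAdef]
  -- G is invertible
  have hGu : IsUnit G := by
    rw [← Matrix.mulVec_injective_iff_isUnit]
    intro x y hxy
    have key : ∀ z : Fin m → ℂ, G *ᵥ z = 0 → z = 0 := by
      intro z hz
      have hAz : A *ᵥ z = 0 := by
        have h0 : star z ⬝ᵥ (Aᴴ * A) *ᵥ z = 0 := by
          rw [← hGdef, hz, dotProduct_zero]
        rwa [← Matrix.mulVec_mulVec, Matrix.dotProduct_mulVec,
          Matrix.vecMul_conjTranspose, star_star,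
          dotProduct_star_self_eq_zero] at h0
      have := Fintype.linearIndependent_iff.1 hli z ?_
      · funext k; exact this k
      · apply (EuclideanSpace.equiv (Fin d) ℂ).injective
        simp only [map_sum, map_zero]
        funext a
        have := congrFun hAz a
        simpa [Matrix.mulVec, dotProduct, hAdef, mul_comm,
          EuclideanSpace.equiv, Finset.sum_apply] using this
    have : G *ᵥ (x - y) = 0 := by
      rw [Matrix.mulVec_sub, hxy, sub_self]
    have := key _ this
    exact sub_eq_zero.1 this
  -- from Penrose 1 : A Aᴴ B A Aᴴ = m • A Aᴴ
  have h1 : A * Aᴴ * B * (A * Aᴴ) = (m : ℂ) • (A * Aᴴ) := by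
    have h := hpen₁
    rw [hρA, Matrix.smul_mul, Matrix.mul_smul, Matrix.smul_mul, smul_smul] at h
    have hc : ((m : ℂ)⁻¹ * (m : ℂ)⁻¹) ≠ 0 :=
      mul_ne_zero (inv_ne_zero hm) (inv_ne_zero hm)
    have h' : A * Aᴴ * B * (A * Aᴴ) =
        ((m : ℂ)⁻¹ * (m : ℂ)⁻¹)⁻¹ • ((m : ℂ)⁻¹ • (A * Aᴴ)) := by
      rw [← h, smul_smul, inv_mul_cancel₀ hc, one_smul]
    rw [h', smul_smul]
    congr 1
    field_simp
  -- sandwich : G * X * G = m • (G * G)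
  have h2 : G * X * G = (m : ℂ) • (G * G) := by
    have h3 := congrArg (fun M => Aᴴ * M * A) h1
    calc G * X * G = Aᴴ * (A * Aᴴ * B * (A * Aᴴ)) * A := by
          simp only [hGdef, hXdef, Matrix.mul_assoc]
      _ = Aᴴ * ((m : ℂ) • (A * Aᴴ)) * A := h3
      _ = (m : ℂ) • (G * G) := by
          simp only [Matrix.mul_smul, Matrix.smul_mul, hGdef, Matrix.mul_assoc]
  -- cancel G on both sides
  have hX : X = (m : ℂ) • (1 : Matrix (Fin m) (Fin m) ℂ) := by
    obtain ⟨u, hu⟩ := hGu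
    have hl : (↑u⁻¹ : Matrix (Fin m) (Fin m) ℂ) * G = 1 := by
      rw [← hu]; exact u.inv_mul
    have hr : G * (↑u⁻¹ : Matrix (Fin m) (Fin m) ℂ) = 1 := by
      rw [← hu]; exact u.mul_inv
    calc X = (↑u⁻¹ * G) * X * (G * ↑u⁻¹) := by
          rw [hl, hr, Matrix.one_mul, Matrix.mul_one]
      _ = ↑u⁻¹ * (G * X * G) * ↑u⁻¹ := by simp only [Matrix.mul_assoc]
      _ = ↑u⁻¹ * ((m : ℂ) • (G * G)) * ↑u⁻¹ := by rw [h2]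
      _ = (m : ℂ) • (↑u⁻¹ * (G * G) * ↑u⁻¹) := by
          simp only [Matrix.mul_smul, Matrix.smul_mul]
      _ = (m : ℂ) • (1 : Matrix (Fin m) (Fin m) ℂ) := by
          rw [show (↑u⁻¹ : Matrix (Fin m) (Fin m) ℂ) * (G * G) * ↑u⁻¹ =
            (↑u⁻¹ * G) * (G * ↑u⁻¹) from by simp only [Matrix.mul_assoc],
            hl, hr, Matrix.one_mul]
  -- entries of X
  have hXij : X i j = if i = j then (m : ℂ) else 0 := by
    rw [hX]
    by_cases hij : i = j <;> simp [hij, Matrix.one_apply]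
  -- X as Gram matrix of the S φ's
  have hSH : Sᴴ = S := hS.isHermitian
  have hXSA : X = (S * A)ᴴ * (S * A) := by
    rw [Matrix.conjTranspose_mul, hSH, hXdef, hBdef]
    simp only [Matrix.mul_assoc]
  have hinner : (∑ a, (starRingEnd ℂ) ((S *ᵥ φ i) a) * (S *ᵥ φ j) a) = X i j := by
    rw [hXSA]
    simp only [Matrix.mul_apply, Matrix.conjTranspose_apply, Matrix.mulVec,
      dotProduct, Matrix.of_apply, hAdef, map_sum, map_mul, star_sum,
      star_mul', Complex.star_def]
  -- final computation
  rw [hf i, hf j, inner_smul_left, inner_smul_right]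
  simp only [PiLp.inner_apply, RCLike.inner_apply]
  simp only [mul_comm ((S *ᵥ (φ j).ofLp) _)]
  rw [hinner, hXij]
  have hsq : (starRingEnd ℂ) ((Real.sqrt m : ℂ))⁻¹ * ((Real.sqrt m : ℂ))⁻¹ =
      (m : ℂ)⁻¹ := by
    rw [map_inv₀, Complex.conj_ofReal, ← mul_inv, ← Complex.ofReal_mul,
      Real.mul_self_sqrt (Nat.cast_nonneg m)]
    norm_num
  by_cases hij : i = j
  · simp only [hij, if_true]
    rw [← mul_assoc, hsq, inv_mul_cancel₀ hm]
  · simp [hij]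
end
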